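/- Let (X,d) be a metric space and μ a Borel measure on X such that every ball has finite measure. Let K : X×X → ℂ be a measurable kernel and κ ≥ 0 be such that ⦀K⦀_{1,0} ≤ κ, ⦀K^*⦀_{1,0} ≤ κ, and ⦀K⦀_{2,0} ≤ κ, where K^*(x,y) = conj(K(y,x)). Define the convolution powers K^{∗1} = K and K^{∗(n+1)} = K^{∗n} ∗ K, where (H∗K)(x,y) = ∫_X H(x,z)K(z,y) dμ(z). Then for every n ≥ 1 one has ⦀K^{∗n}⦀_{2,0} ≤ κⁿ, and consequently Σ_{n≥1} ⦀K^{∗n}⦀_{2,0}/n! ≤ e^κ − 1. -/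

import Mathlib

open MeasureTheory Metric ENNReal

/-- Weighted mixed norm for `ℝ≥0∞`-valued kernels:
`⦀K⦀_{p,s} = ess sup_y V(y,1)^{1/p'} ‖K(·,y)(1+d(·,y))^s‖_{L^p}`. -/
noncomputable def kNormE {X : Type} [MetricSpace X] [MeasurableSpace X] (μ : Measure X)
    (p : ℝ≥0∞) (s : ℝ) (K : X → X → ℝ≥0∞) : ℝ≥0∞ :=
  essSup (fun y => (μ (ball y 1)) ^ ((1 - p⁻¹).toReal) *
    (if p = ∞ then essSup (fun x => K x y * ENNReal.ofReal ((1 + dist x y) ^ s)) μ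
     else (∫⁻ x, (K x y * ENNReal.ofReal ((1 + dist x y) ^ s)) ^ p.toReal ∂μ) ^ (1 / p.toReal))) μ

/-- Weighted mixed norm `⦀K⦀_{p,s}` for complex-valued kernels. -/
noncomputable def kNorm {X : Type} [MetricSpace X] [MeasurableSpace X] (μ : Measure X)
    (p : ℝ≥0∞) (s : ℝ) (K : X → X → ℂ) : ℝ≥0∞ :=
  kNormE μ p s (fun x y => (‖K x y‖₊ : ℝ≥0∞))

/-- Kernel convolution `(H∗K)(x,y) = ∫ H(x,z) K(z,y) dμ(z)`. -/
noncomputable def kConv {X : Type} [MeasurableSpace X] (μ : Measure X)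
    (H K : X → X → ℂ) : X → X → ℂ :=
  fun x y => ∫ z, H x z * K z y ∂μ

/-- Convolution powers: `convPow μ K n = K^{∗(n+1)}`, i.e. `K^{∗1} = K` and
`K^{∗(n+1)} = K^{∗n} ∗ K`. -/
noncomputable def convPow {X : Type} [MeasurableSpace X] (μ : Measure X)
    (K : X → X → ℂ) : ℕ → X → X → ℂ
  | 0 => K
  | n + 1 => kConv μ (convPow μ K n) K

/-- `ℝ≥0∞`-valued convolution powers (majorants of `convPow`). -/
noncomputable def auxNK {X : Type} [MeasurableSpace X] (μ : Measure X)
    (M : X → X → ℝ≥0∞) : ℕ → X → X → ℝ≥0∞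
  | 0 => M
  | n + 1 => fun x y => ∫⁻ z, auxNK μ M n x z * M z y ∂μ

lemma auxNK_measurable {X : Type} [MeasurableSpace X] {μ : Measure X} [SFinite μ]
    {M : X → X → ℝ≥0∞} (hM : Measurable (Function.uncurry M)) (n : ℕ) :
    Measurable (Function.uncurry (auxNK μ M n)) := by
  induction n with
  | zero => exact hM
  | succ n ih =>
    have h : Function.uncurry (auxNK μ M (n+1))
        = fun p : X × X => ∫⁻ z, auxNK μ M n p.1 z * M z p.2 ∂μ := rfl
    rw [h]
    exact Measurable.lintegral_prod_right
      (f := fun (p : X × X) z => auxNK μ M n p.1 z * M z p.2)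
      ((ih.comp ((measurable_fst.fst).prodMk measurable_snd)).mul
        (hM.comp (measurable_snd.prodMk measurable_fst.snd)))

lemma auxNK_left {X : Type} [MeasurableSpace X] {μ : Measure X} [SigmaFinite μ]
    {M : X → X → ℝ≥0∞} (hM : Measurable (Function.uncurry M)) (n : ℕ) (x y : X) :
    auxNK μ M (n+1) x y = ∫⁻ z, M x z * auxNK μ M n z y ∂μ := by
  induction n generalizing x y with
  | zero => rfl
  | succ n ih =>
    show (∫⁻ z, auxNK μ M (n+1) x z * M z y ∂μ) = _
    calc ∫⁻ z, auxNK μ M (n+1) x z * M z y ∂μ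
        = ∫⁻ z, (∫⁻ w, M x w * auxNK μ M n w z ∂μ) * M z y ∂μ := by
          refine lintegral_congr fun z => ?_; rw [ih]
      _ = ∫⁻ z, ∫⁻ w, M x w * auxNK μ M n w z * M z y ∂μ ∂μ := by
          refine lintegral_congr fun z => ?_
          have hmes : AEMeasurable (fun w => M x w * auxNK μ M n w z) μ :=
            Measurable.aemeasurable (by
              exact (hM.comp measurable_prodMk_left).mul
                ((auxNK_measurable hM n).comp measurable_prodMk_right))
          rw [lintegral_mul_const'' _ hmes]
      _ = ∫⁻ w, ∫⁻ z, M x w * auxNK μ M n w z * M z y ∂μ ∂μ := by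
          refine lintegral_lintegral_swap ?_
          refine Measurable.aemeasurable ?_
          refine Measurable.mul (Measurable.mul ?_ ?_) ?_
          · exact hM.comp (measurable_const.prodMk measurable_snd)
          · exact (auxNK_measurable hM n).comp (measurable_snd.prodMk measurable_fst)
          · exact hM.comp (measurable_fst.prodMk measurable_const)
      _ = ∫⁻ w, M x w * auxNK μ M (n+1) w y ∂μ := by
          refine lintegral_congr fun w => ?_
          simp_rw [mul_assoc]
          have hmes : AEMeasurable (fun z => auxNK μ M n w z * M z y) μ :=
            Measurable.aemeasurable (by
              exact ((auxNK_measurable hM n).comp measurable_prodMk_left).mul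
                (hM.comp measurable_prodMk_right))
          rw [lintegral_const_mul'' _ hmes]
          rfl

lemma convPow_le_auxNK {X : Type} [MeasurableSpace X] (μ : Measure X)
    (K : X → X → ℂ) (n : ℕ) (x y : X) :
    (‖convPow μ K n x y‖₊ : ℝ≥0∞) ≤ auxNK μ (fun a b => (‖K a b‖₊ : ℝ≥0∞)) n x y := by
  induction n generalizing x y with
  | zero => exact le_rfl
  | succ n ih =>
    calc (‖convPow μ K (n+1) x y‖₊ : ℝ≥0∞)
        ≤ ∫⁻ z, (‖convPow μ K n x z * K z y‖₊ : ℝ≥0∞) ∂μ :=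
          enorm_integral_le_lintegral_enorm _
      _ ≤ ∫⁻ z, auxNK μ (fun a b => (‖K a b‖₊ : ℝ≥0∞)) n x z * (‖K z y‖₊ : ℝ≥0∞) ∂μ := by
          refine lintegral_mono fun z => ?_
          rw [nnnorm_mul, ENNReal.coe_mul]
          exact mul_le_mul_left (ih x z) _
      _ = _ := rfl

lemma schurE {X : Type} [MeasurableSpace X] {μ : Measure X} [SigmaFinite μ]
    {M : X → X → ℝ≥0∞} (hM : Measurable (Function.uncurry M)) {c : ℝ≥0∞}
    (hrow : ∀ᵐ x ∂μ, ∫⁻ z, M x z ∂μ ≤ c)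
    (hcol : ∀ᵐ z ∂μ, ∫⁻ x, M x z ∂μ ≤ c)
    {f : X → ℝ≥0∞} (hf : Measurable f) :
    ∫⁻ x, (∫⁻ z, M x z * f z ∂μ) ^ (2:ℝ) ∂μ ≤ c ^ (2:ℝ) * ∫⁻ z, f z ^ (2:ℝ) ∂μ := by
  have hMx : ∀ x, Measurable fun z => M x z := fun x => hM.comp measurable_prodMk_left
  have hf2 : Measurable fun z => f z ^ (2:ℝ) := hf.pow_const _
  have hMf2 : Measurable (Function.uncurry fun x z => M x z * f z ^ (2:ℝ)) :=
    hM.mul (hf2.comp measurable_snd)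
  have step1 : ∀ᵐ x ∂μ, (∫⁻ z, M x z * f z ∂μ) ^ (2:ℝ)
      ≤ c * ∫⁻ z, M x z * f z ^ (2:ℝ) ∂μ := by
    filter_upwards [hrow] with x hx
    have hconj : (2:ℝ).HolderConjugate 2 := by rw [Real.holderConjugate_iff]; norm_num
    have hg : AEMeasurable (fun z => M x z ^ (1/2:ℝ)) μ := ((hMx x).pow_const _).aemeasurable
    have hh : AEMeasurable (fun z => M x z ^ (1/2:ℝ) * f z) μ :=
      (((hMx x).pow_const _).mul hf).aemeasurable
    have key := ENNReal.lintegral_mul_le_Lp_mul_Lq μ hconj hg hh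
    have heq : ∀ z : X, ((fun z => M x z ^ (1/2:ℝ)) * fun z => M x z ^ (1/2:ℝ) * f z) z
        = M x z * f z := by
      intro z
      show M x z ^ (1/2:ℝ) * (M x z ^ (1/2:ℝ) * f z) = M x z * f z
      rw [← mul_assoc, ← ENNReal.rpow_add_of_nonneg _ _ (by norm_num) (by norm_num)]
      norm_num
    have hA : ∀ z : X, (M x z ^ (1/2:ℝ)) ^ (2:ℝ) = M x z := by
      intro z
      rw [← ENNReal.rpow_mul]; norm_num
    have hB : ∀ z : X, (M x z ^ (1/2:ℝ) * f z) ^ (2:ℝ) = M x z * f z ^ (2:ℝ) := by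
      intro z
      rw [ENNReal.mul_rpow_of_nonneg _ _ (by norm_num : (0:ℝ) ≤ 2), hA]
    simp only [heq, hA, hB] at key
    calc (∫⁻ z, M x z * f z ∂μ) ^ (2:ℝ)
        ≤ ((∫⁻ z, M x z ∂μ) ^ (1/(2:ℝ)) * (∫⁻ z, M x z * f z ^ (2:ℝ) ∂μ) ^ (1/(2:ℝ))) ^ (2:ℝ) :=
          ENNReal.rpow_le_rpow key (by norm_num)
      _ = (∫⁻ z, M x z ∂μ) * ∫⁻ z, M x z * f z ^ (2:ℝ) ∂μ := by
          rw [ENNReal.mul_rpow_of_nonneg _ _ (by norm_num : (0:ℝ) ≤ 2),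
            ← ENNReal.rpow_mul, ← ENNReal.rpow_mul]
          norm_num
      _ ≤ c * ∫⁻ z, M x z * f z ^ (2:ℝ) ∂μ := mul_le_mul_left hx _
  calc ∫⁻ x, (∫⁻ z, M x z * f z ∂μ) ^ (2:ℝ) ∂μ
      ≤ ∫⁻ x, c * ∫⁻ z, M x z * f z ^ (2:ℝ) ∂μ ∂μ := lintegral_mono_ae step1
    _ = c * ∫⁻ x, ∫⁻ z, M x z * f z ^ (2:ℝ) ∂μ ∂μ :=
        lintegral_const_mul'' c (Measurable.lintegral_prod_right hMf2).aemeasurable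
    _ = c * ∫⁻ z, ∫⁻ x, M x z * f z ^ (2:ℝ) ∂μ ∂μ := by
        rw [lintegral_lintegral_swap hMf2.aemeasurable]
    _ = c * ∫⁻ z, (∫⁻ x, M x z ∂μ) * f z ^ (2:ℝ) ∂μ := by
        congr 1
        refine lintegral_congr fun z => ?_
        have hmes : AEMeasurable (fun x => M x z) μ :=
          Measurable.aemeasurable (by exact hM.comp measurable_prodMk_right)
        rw [lintegral_mul_const'' _ hmes]
    _ ≤ c * ∫⁻ z, c * f z ^ (2:ℝ) ∂μ := by
        refine mul_le_mul_right (lintegral_mono_ae ?_) c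
        filter_upwards [hcol] with z hz
        exact mul_le_mul_left hz _
    _ = c ^ (2:ℝ) * ∫⁻ z, f z ^ (2:ℝ) ∂μ := by
        rw [lintegral_const_mul'' c hf2.aemeasurable, ← mul_assoc,
          show c ^ (2:ℝ) = c * c by
            rw [show (2:ℝ) = ((2:ℕ):ℝ) by norm_num, ENNReal.rpow_natCast, pow_two]]

/-- If `⦀K⦀_{1,0}, ⦀K^*⦀_{1,0}, ⦀K⦀_{2,0} ≤ κ`, then `⦀K^{∗n}⦀_{2,0} ≤ κⁿ` for all `n ≥ 1`,
and `Σ_{n≥1} ⦀K^{∗n}⦀_{2,0}/n! ≤ e^κ − 1`. -/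
theorem stmt8 {X : Type} [MetricSpace X] [MeasurableSpace X] [BorelSpace X] (μ : Measure X)
    (hball : ∀ (x : X) (r : ℝ), μ (ball x r) < ∞)
    (K : X → X → ℂ) (hKm : Measurable (Function.uncurry K)) (κ : ℝ) (hκ : 0 ≤ κ)
    (h10 : kNorm μ 1 0 K ≤ ENNReal.ofReal κ)
    (h10s : kNorm μ 1 0 (fun x y => starRingEnd ℂ (K y x)) ≤ ENNReal.ofReal κ)
    (h20 : kNorm μ 2 0 K ≤ ENNReal.ofReal κ) :
    (∀ n : ℕ, kNorm μ 2 0 (convPow μ K n) ≤ ENNReal.ofReal (κ ^ (n + 1))) ∧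
    ∑' n : ℕ, kNorm μ 2 0 (convPow μ K n) / (Nat.factorial (n + 1) : ℝ≥0∞) ≤
      ENNReal.ofReal (Real.exp κ - 1) := by
  haveI : SigmaFinite μ := by
    obtain hX | hX := isEmpty_or_nonempty X
    · exact ⟨⟨⟨fun _ => ∅, fun _ => trivial, by simp, by
        rw [Set.iUnion_empty]; exact (Set.univ_eq_empty_iff.2 hX).symm⟩⟩⟩
    · obtain ⟨x₀⟩ := hX
      refine ⟨⟨⟨fun n => ball x₀ n, fun _ => trivial, fun n => hball x₀ n, ?_⟩⟩⟩
      refine Set.eq_univ_of_forall fun x => ?_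
      obtain ⟨n, hn⟩ := exists_nat_gt (dist x x₀)
      exact Set.mem_iUnion.2 ⟨n, mem_ball.2 hn⟩
  set κ' : ℝ≥0∞ := ENNReal.ofReal κ with hκ'
  set M : X → X → ℝ≥0∞ := fun a b => (‖K a b‖₊ : ℝ≥0∞) with hM
  have hMm : Measurable (Function.uncurry M) := hKm.enorm
  -- simplification of kNorm at (1,0)
  have k1 : ∀ L : X → X → ℂ,
      kNorm μ 1 0 L = essSup (fun y => ∫⁻ x, (‖L x y‖₊ : ℝ≥0∞) ∂μ) μ := by
    intro L
    unfold kNorm kNormE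
    simp [ENNReal.one_ne_top, Real.rpow_zero]
  -- simplification of kNorm at (2,0)
  have k2 : ∀ L : X → X → ℂ,
      kNorm μ 2 0 L = essSup (fun y => (μ (ball y 1)) ^ (1/2:ℝ) *
        (∫⁻ x, ((‖L x y‖₊ : ℝ≥0∞)) ^ (2:ℝ) ∂μ) ^ (1/(2:ℝ))) μ := by
    intro L
    unfold kNorm kNormE
    have h2 : ((1:ℝ≥0∞) - 2⁻¹).toReal = 1/2 := by
      rw [ENNReal.one_sub_inv_two]
      simp [ENNReal.toReal_inv]
    simp [ENNReal.ofNat_ne_top, Real.rpow_zero, h2, ENNReal.toReal_ofNat]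
  have hcol : ∀ᵐ y ∂μ, ∫⁻ x, M x y ∂μ ≤ κ' := by
    rw [k1] at h10
    filter_upwards [_root_.ae_le_essSup (f := fun y => ∫⁻ x, (‖K x y‖₊ : ℝ≥0∞) ∂μ) (μ := μ)]
      with y hy
    exact hy.trans h10
  have hrow : ∀ᵐ x ∂μ, ∫⁻ z, M x z ∂μ ≤ κ' := by
    rw [k1] at h10s
    have he : ∀ y, (fun y => ∫⁻ x, (‖starRingEnd ℂ (K y x)‖₊ : ℝ≥0∞) ∂μ) y
        = ∫⁻ z, M y z ∂μ := by
      intro y; refine lintegral_congr fun x => ?_; simp [hM]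
    rw [funext he] at h10s
    filter_upwards [_root_.ae_le_essSup (f := fun y => ∫⁻ z, M y z ∂μ) (μ := μ)] with x hx
    exact hx.trans h10s
  have hL2 : ∀ᵐ y ∂μ, (μ (ball y 1)) ^ (1/2:ℝ) *
      (∫⁻ x, (M x y) ^ (2:ℝ) ∂μ) ^ (1/(2:ℝ)) ≤ κ' := by
    rw [k2] at h20
    filter_upwards [_root_.ae_le_essSup (f := fun y => (μ (ball y 1)) ^ (1/2:ℝ) *
      (∫⁻ x, ((‖K x y‖₊ : ℝ≥0∞)) ^ (2:ℝ) ∂μ) ^ (1/(2:ℝ))) (μ := μ)] with y hy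
    exact hy.trans h20
  -- main induction
  have key : ∀ n : ℕ, ∀ᵐ y ∂μ, (μ (ball y 1)) ^ (1/2:ℝ) *
      (∫⁻ x, (auxNK μ M n x y) ^ (2:ℝ) ∂μ) ^ (1/(2:ℝ)) ≤ κ' ^ (n+1) := by
    intro n
    induction n with
    | zero => simpa [auxNK] using hL2
    | succ n ih =>
      filter_upwards [ih] with y hy
      have hf : Measurable fun z => auxNK μ M n z y :=
        (auxNK_measurable hMm n).comp measurable_prodMk_right
      have h1 : ∫⁻ x, (auxNK μ M (n+1) x y) ^ (2:ℝ) ∂μ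
          ≤ κ' ^ (2:ℝ) * ∫⁻ z, (auxNK μ M n z y) ^ (2:ℝ) ∂μ := by
        simp_rw [auxNK_left hMm n]
        exact schurE hMm hrow hcol hf
      calc (μ (ball y 1)) ^ (1/2:ℝ) * (∫⁻ x, (auxNK μ M (n+1) x y) ^ (2:ℝ) ∂μ) ^ (1/(2:ℝ))
          ≤ (μ (ball y 1)) ^ (1/2:ℝ) *
            (κ' ^ (2:ℝ) * ∫⁻ z, (auxNK μ M n z y) ^ (2:ℝ) ∂μ) ^ (1/(2:ℝ)) :=
            mul_le_mul_right (ENNReal.rpow_le_rpow h1 (by norm_num)) _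
        _ = κ' * ((μ (ball y 1)) ^ (1/2:ℝ) *
            (∫⁻ z, (auxNK μ M n z y) ^ (2:ℝ) ∂μ) ^ (1/(2:ℝ))) := by
            rw [ENNReal.mul_rpow_of_nonneg _ _ (by norm_num : (0:ℝ) ≤ 1/2),
              ← ENNReal.rpow_mul]
            norm_num
            ring
        _ ≤ κ' * κ' ^ (n+1) := mul_le_mul_right hy _
        _ = κ' ^ (n+2) := by rw [← pow_succ']
  have part1 : ∀ n : ℕ, kNorm μ 2 0 (convPow μ K n) ≤ ENNReal.ofReal (κ ^ (n + 1)) := by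
    intro n
    rw [k2, ENNReal.ofReal_pow hκ]
    refine essSup_le_of_ae_le _ ?_
    filter_upwards [key n] with y hy
    refine le_trans (mul_le_mul_right ?_ _) hy
    refine ENNReal.rpow_le_rpow ?_ (by norm_num)
    exact lintegral_mono fun x =>
      ENNReal.rpow_le_rpow (convPow_le_auxNK μ K n x y) (by norm_num)
  refine ⟨part1, ?_⟩
  have hsum : Summable (fun n : ℕ => κ ^ (n+1) / ((n+1).factorial : ℝ)) :=
    (summable_nat_add_iff 1).2 (Real.summable_pow_div_factorial κ)
  have hexp : ∑' n : ℕ, κ ^ (n+1) / ((n+1).factorial : ℝ) = Real.exp κ - 1 := by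
    have h0 := Real.summable_pow_div_factorial κ
    have hsplit := Summable.tsum_eq_zero_add h0
    have hexp' : Real.exp κ = ∑' n : ℕ, κ ^ n / (n.factorial : ℝ) := by
      rw [Real.exp_eq_exp_ℝ, NormedSpace.exp_eq_tsum_div]
    rw [hexp', hsplit]
    simp
  calc ∑' n : ℕ, kNorm μ 2 0 (convPow μ K n) / (Nat.factorial (n + 1) : ℝ≥0∞)
      ≤ ∑' n : ℕ, ENNReal.ofReal (κ ^ (n+1)) / (Nat.factorial (n + 1) : ℝ≥0∞) :=
        ENNReal.tsum_le_tsum fun n => ENNReal.div_le_div_right (part1 n) _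
    _ = ∑' n : ℕ, ENNReal.ofReal (κ ^ (n+1) / ((n+1).factorial : ℝ)) := by
        refine tsum_congr fun n => ?_
        rw [ENNReal.ofReal_div_of_pos (by positivity), ENNReal.ofReal_natCast]
    _ = ENNReal.ofReal (∑' n : ℕ, κ ^ (n+1) / ((n+1).factorial : ℝ)) :=
        (ENNReal.ofReal_tsum_of_nonneg (fun n => by positivity) hsum).symm
    _ = ENNReal.ofReal (Real.exp κ - 1) := by rw [hexp]
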